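/- The λ-volume of E_{T,c} equals (2^{#S_ℝ} · π^{#S_ℂ} · ϖ^k)^d · c · T for all T, c > 0. In particular r·|E_{T,c}| = T·|E_{r,c}| for all r, T, c > 0. -/

import Mathlib

/- Common setup: the Minkowski space `K_S` of a number field `K`, the homogeneous space
`X = SL_d(K_S)/SL_d(𝒪)`, weighted quasi-norms, the sets `E_{T,c}`, Siegel transforms,
the diagonal flow `g_t`, the unipotents `u(ϑ)`, the function `α` and the class `C_α(X)`. -/

open MeasureTheory NumberField Matrix Filter Topology Set
open scoped ENNReal Classical

noncomputable section

namespace Paper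

variable (K : Type) [Field K] [NumberField K]

/-- The Minkowski space `K_S ≅ ℝ^{r₁} × ℂ^{r₂}` of the number field `K`. -/
abbrev KS : Type :=
  ({w : InfinitePlace K // w.IsReal} → ℝ) × ({w : InfinitePlace K // w.IsComplex} → ℂ)

/-- The absolute value of the component of `z ∈ K_S` at the archimedean place `w`. -/
def placeAbs (z : KS K) (w : InfinitePlace K) : ℝ :=
  if h : w.IsReal then |z.1 ⟨w, h⟩|
  else ‖z.2 ⟨w, NumberField.InfinitePlace.not_isReal_iff_isComplex.mp h⟩‖

variable {K}

/-- The weighted quasi-norm `‖x‖_a = max_{i,w} |x_{i,w}|^{1/a_{i,w}}` on `K_S^m`. -/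
def wnorm {m : ℕ} (a : Fin m → InfinitePlace K → ℝ) (x : Fin m → KS K) : ℝ :=
  ⨆ i, ⨆ w, placeAbs K (x i) w ^ (1 / a i w)

/-- `a` is a weight vector: positive entries, and
`∑_{w real} ∑ᵢ a_{i,w} + 2 ∑_{w complex} ∑ᵢ a_{i,w} = 1`. -/
def IsWeight {m : ℕ} (a : Fin m → InfinitePlace K → ℝ) : Prop :=
  (∀ i w, 0 < a i w) ∧
    ((∑ w : {w : InfinitePlace K // w.IsReal}, ∑ i, a i w.1) +
      2 * ∑ w : {w : InfinitePlace K // w.IsComplex}, ∑ i, a i w.1) = 1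

/-- The standard Euclidean inner product on `K_S ≅ ℝ^k`. -/
def ksInner (z z' : KS K) : ℝ :=
  ∑ w, z.1 w * z'.1 w + ∑ w, (z.2 w * (starRingEnd ℂ) (z'.2 w)).re

/-- The standard Euclidean inner product on `K_S^ι ≅ ℝ^{|ι| k}`. -/
def vinner {ι : Type} [Fintype ι] (v v' : ι → KS K) : ℝ := ∑ i, ksInner (v i) (v' i)

/-- The Euclidean norm on `K_S^ι ≅ ℝ^{|ι| k}`. -/
def enorm2 {ι : Type} [Fintype ι] (v : ι → KS K) : ℝ := Real.sqrt (vinner v v)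

section mn
variable {m n : ℕ}

/-- The first `m` coordinates (the `x`-part) of a vector in `K_S^{m+n}`. -/
def xpart (z : (Fin m ⊕ Fin n) → KS K) : Fin m → KS K := fun i => z (Sum.inl i)

/-- The last `n` coordinates (the `y`-part) of a vector in `K_S^{m+n}`. -/
def ypart (z : (Fin m ⊕ Fin n) → KS K) : Fin n → KS K := fun j => z (Sum.inr j)

/-- The set `E_{T,c} = {(x,y) ∈ K_S^m × K_S^n : ‖x‖_a ‖y‖_b < c, 1 ≤ ‖y‖_b < e^T}`. -/
def Eset (a : Fin m → InfinitePlace K → ℝ) (b : Fin n → InfinitePlace K → ℝ) (c T : ℝ) :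
    Set ((Fin m ⊕ Fin n) → KS K) :=
  {z | wnorm a (xpart z) * wnorm b (ypart z) < c ∧
    1 ≤ wnorm b (ypart z) ∧ wnorm b (ypart z) < Real.exp T}

/-- The set `F_{r,c} = {(x,y) ∈ K_S^m × K_S^n : ‖x‖_a ‖y‖_b < c, 1 ≤ ‖x‖_a < e^r}`. -/
def Fset (a : Fin m → InfinitePlace K → ℝ) (b : Fin n → InfinitePlace K → ℝ) (c r : ℝ) :
    Set ((Fin m ⊕ Fin n) → KS K) :=
  {z | wnorm a (xpart z) * wnorm b (ypart z) < c ∧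
    1 ≤ wnorm a (xpart z) ∧ wnorm a (xpart z) < Real.exp r}

/-- The `a`-weighted flow `F_{at}` on `K_S^m`. -/
def flow (a : Fin m → InfinitePlace K → ℝ) (t : ℝ) (x : Fin m → KS K) : Fin m → KS K :=
  fun i => (fun w => Real.exp (a i w.1 * t) * (x i).1 w,
            fun w => (Real.exp (a i w.1 * t) : ℂ) * (x i).2 w)

end mn

/-- The unit sphere `𝕊 = {x ∈ K_S^ι : ∑_{i,v} |x_{i,v}|² = 1}`. -/
def usphere {ι : Type} [Fintype ι] : Set (ι → KS K) := {x | vinner x x = 1}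

/-- `π_a(x) ∈ A`: some (equivalently, the unique) point of the `F_{at}`-orbit of `x`
on the unit sphere lies in `A`. -/
def projIn {m : ℕ} (a : Fin m → InfinitePlace K → ℝ) (A : Set (Fin m → KS K))
    (x : Fin m → KS K) : Prop :=
  ∃ t : ℝ, flow a t x ∈ usphere ∧ flow a t x ∈ A

/-- The set `E_{T,c}(A,B)`. -/
def EsetAB {m n : ℕ} (a : Fin m → InfinitePlace K → ℝ) (b : Fin n → InfinitePlace K → ℝ)
    (c T : ℝ) (A : Set (Fin m → KS K)) (B : Set (Fin n → KS K)) :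
    Set ((Fin m ⊕ Fin n) → KS K) :=
  {z | z ∈ Eset a b c T ∧ projIn a A (xpart z) ∧ projIn b B (ypart z)}

/-- The cone (minus the origin) on a subset `A` of the unit sphere. -/
def cone {ι : Type} [Fintype ι] (A : Set (ι → KS K)) : Set (ι → KS K) :=
  {x | ∃ r : ℝ, 0 < r ∧ r ≤ 1 ∧ ∃ y ∈ A, x = r • y}

/-- The standard probability measure of a subset `A` of the unit sphere, defined as the
normalized Lebesgue measure of the cone on `A`. -/
def sphVol {ι : Type} [Fintype ι] (A : Set (ι → KS K)) : ℝ≥0∞ :=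
  volume (cone A) / volume (cone (usphere (K := K) (ι := ι)))

/-- The topological frontier of a subset `A` of the unit sphere, relative to the sphere. -/
def relFrontier {ι : Type} [Fintype ι] (A : Set (ι → KS K)) : Set (ι → KS K) :=
  closure A ∩ closure ((usphere (K := K) (ι := ι)) \ A)

variable (K)

/-- The Haar measure `λ` on `K_S`: the multiple `ϖ` of Lebesgue measure in each of the
`k` real coordinates of `K_S ≅ ℝ^k`. -/
def lam (ϖ : ℝ) : Measure (KS K) :=
  (ENNReal.ofReal ϖ) ^ (Module.finrank ℚ K) • (volume : Measure (KS K))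

/-- The Haar measure `λ` on `K_S^ι`: the product of copies of `lam K ϖ`. -/
def lamd (ι : Type) [Fintype ι] (ϖ : ℝ) : Measure (ι → KS K) :=
  (ENNReal.ofReal ϖ) ^ (Module.finrank ℚ K * Fintype.card ι) • (volume : Measure (ι → KS K))

/-- The embedding `ι_S : 𝒪 → K_S` of the ring of integers into the Minkowski space. -/
def intHom : 𝓞 K →+* KS K := (mixedEmbedding K).comp (algebraMap (𝓞 K) K)

/-- The image `ι_S(𝒪)` of `𝒪` in `K_S`, as an additive subgroup. -/
def intLattice : AddSubgroup (KS K) := (intHom K).toAddMonoidHom.range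

/-- `𝒪` has covolume one in `K_S` with respect to the measure `lam K ϖ`. -/
def covolOne (ϖ : ℝ) : Prop :=
  ∃ F : Set (KS K), IsAddFundamentalDomain (intLattice K) F (lam K ϖ) ∧ lam K ϖ F = 1

/-- `G = SL_d(K_S)`, with rows/columns indexed by `ι`. -/
abbrev SLd (ι : Type) [Fintype ι] [DecidableEq ι] : Type :=
  Matrix.SpecialLinearGroup ι (KS K)

variable (ι : Type) [Fintype ι] [DecidableEq ι]

instance : TopologicalSpace (SLd K ι) :=
  TopologicalSpace.induced (fun g => (g : Matrix ι ι (KS K))) inferInstance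

instance : MeasurableSpace (Matrix ι ι (KS K)) :=
  MeasurableSpace.pi (m := fun _ : ι => inferInstance)

instance : MeasurableSpace (SLd K ι) :=
  MeasurableSpace.comap (fun g => (g : Matrix ι ι (KS K))) inferInstance

/-- `Γ = SL_d(ι_S(𝒪))`, the image of `SL_d(𝒪)` in `G`. -/
def Gamma : Subgroup (SLd K ι) :=
  (Matrix.SpecialLinearGroup.map (n := ι) (intHom K)).range

/-- The homogeneous space `X = G/Γ`. -/
abbrev XS : Type := SLd K ι ⧸ Gamma K ι

/-- The standard lattice `ι_S(𝒪)^d ⊆ K_S^d`. -/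
def stdLat : Set (ι → KS K) := {v | ∃ w : ι → 𝓞 K, v = fun i => intHom K (w i)}

/-- The unimodular lattice in `K_S^d` corresponding to a point of `X = G/Γ`:
the orbit `g · ι_S(𝒪)^d` of the standard lattice under any representative `g` of `x`. -/
def latticeOf (x : XS K ι) : Set (ι → KS K) :=
  {v | ∃ g : SLd K ι, QuotientGroup.mk g = x ∧
    ∃ w ∈ stdLat K ι, v = Matrix.mulVec (g : Matrix ι ι (KS K)) w}

/-- The Siegel transform `f̂(Λ) = ∑_{v ∈ Λ ∖ {0}} f(v)`. -/
def siegel (f : (ι → KS K) → ℝ) (x : XS K ι) : ℝ :=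
  ∑' v : ↥(latticeOf K ι x \ {0}), f ↑v

/-- The open Euclidean ball of radius `r` about the origin in `K_S^ι ≅ ℝ^{|ι| k}`. -/
def Bset (r : ℝ) : Set (ι → KS K) := {v | enorm2 v < r}

/-- The open annulus `{v ∈ K_S^ι : s < ‖v‖₂ < r}`. -/
def annulus (s r : ℝ) : Set (ι → KS K) := {v | s < enorm2 v ∧ enorm2 v < r}

variable {K ι}

/-- The function `α(Λ) = sup { d(Λ')⁻¹ : Λ' a subgroup of Λ }`: the supremum is over the
subgroups generated by linearly independent tuples of lattice vectors, whose covolume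
`d(Λ')` in their real span is the square root of the Gram determinant. -/
def alpha (x : XS K ι) : ℝ :=
  ⨆ (j : ℕ) (v : Fin j → (ι → KS K)) (_ : ∀ i, v i ∈ latticeOf K ι x)
    (_ : LinearIndependent ℝ v),
    (Real.sqrt (Matrix.det (Matrix.of fun i i' => vinner (v i) (v i'))))⁻¹

/-- The class `C_α(X)`: functions continuous off a `μ`-null set whose growth is
majorized by `α`. -/
def Calpha (μ : Measure (XS K ι)) : Set ((XS K ι) → ℝ) :=
  {φ | (∃ N : Set (XS K ι), μ N = 0 ∧ ∀ x ∉ N, ContinuousAt φ x) ∧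
    ∃ C : ℝ, 0 < C ∧ ∀ x, |φ x| ≤ C * alpha x}

/-- Birkhoff genericity of `x ∈ X` for the flow `g` with respect to `φ`:
`(1/T) ∫₀ᵀ φ(g_t x) dt → ∫_X φ dμ` as `T → ∞`. -/
def IsGeneric (μ : Measure (XS K ι)) (g : ℝ → SLd K ι) (φ : XS K ι → ℝ) (x : XS K ι) : Prop :=
  Tendsto (fun T : ℝ => (1 / T) * ∫ t in (0:ℝ)..T, φ (g t • x)) atTop (𝓝 (∫ y, φ y ∂μ))

variable {m n : ℕ}

/-- The diagonal one-parameter subgroup `g_t`, as a matrix. -/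
def gtMat (a : Fin m → InfinitePlace K → ℝ) (b : Fin n → InfinitePlace K → ℝ) (t : ℝ) :
    Matrix (Fin m ⊕ Fin n) (Fin m ⊕ Fin n) (KS K) :=
  Matrix.diagonal (Sum.elim
    (fun i => ((fun w => Real.exp (a i w.1 * t)), (fun w => (Real.exp (a i w.1 * t) : ℂ))))
    (fun j => ((fun w => Real.exp (-(b j w.1) * t)), (fun w => (Real.exp (-(b j w.1) * t) : ℂ)))))

/-- `g_t` as an element of `SL_d(K_S)`, given that its determinant is one
(which is the assertion `g_t ∈ G` of the paper). -/
def gtSL (a : Fin m → InfinitePlace K → ℝ) (b : Fin n → InfinitePlace K → ℝ)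
    (hdet : ∀ t : ℝ, (gtMat a b t).det = 1) (t : ℝ) : SLd K (Fin m ⊕ Fin n) :=
  ⟨gtMat a b t, hdet t⟩

/-- `u(ϑ) = [[1_m, ϑ], [0, 1_n]]`, as an element of `SL_d(K_S)`. -/
def uSL (ϑ : Fin m → Fin n → KS K) : SLd K (Fin m ⊕ Fin n) :=
  ⟨Matrix.fromBlocks 1 (Matrix.of ϑ) 0 1, by
    rw [Matrix.det_fromBlocks_zero₂₁]; simp⟩

variable (K m n)

/-- The underlying matrix of an element of `SL_{m+n}(K_S)`. -/
abbrev mat (g : SLd K (Fin m ⊕ Fin n)) : Matrix (Fin m ⊕ Fin n) (Fin m ⊕ Fin n) (KS K) := g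

/-- The set `ℳ` of elements of `G` whose upper-left `m × m` block is invertible. -/
def Mset : Set (SLd K (Fin m ⊕ Fin n)) :=
  {g | IsUnit ((mat K m n g).toBlocks₁₁).det}

/-- The subgroup `ℋ` of block lower-triangular elements of `G`. -/
def Hsub : Subgroup (SLd K (Fin m ⊕ Fin n)) where
  carrier := {g | (mat K m n g).toBlocks₁₂ = 0}
  one_mem' := by
    show (mat K m n 1).toBlocks₁₂ = 0
    rw [show mat K m n 1 = (1 : Matrix (Fin m ⊕ Fin n) (Fin m ⊕ Fin n) (KS K)) from rfl,
      ← Matrix.fromBlocks_one, Matrix.toBlocks_fromBlocks₁₂]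
  mul_mem' := by
    intro a b ha hb
    have ha' : (mat K m n a).toBlocks₁₂ = 0 := ha
    have hb' : (mat K m n b).toBlocks₁₂ = 0 := hb
    have ha2 : Matrix.fromBlocks (mat K m n a).toBlocks₁₁ 0
        (mat K m n a).toBlocks₂₁ (mat K m n a).toBlocks₂₂ = mat K m n a := by
      rw [← ha']; exact Matrix.fromBlocks_toBlocks _
    have hb2 : Matrix.fromBlocks (mat K m n b).toBlocks₁₁ 0
        (mat K m n b).toBlocks₂₁ (mat K m n b).toBlocks₂₂ = mat K m n b := by
      rw [← hb']; exact Matrix.fromBlocks_toBlocks _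
    show (mat K m n (a * b)).toBlocks₁₂ = 0
    have : mat K m n (a * b) = mat K m n a * mat K m n b := rfl
    rw [this, ← ha2, ← hb2, Matrix.fromBlocks_multiply]
    simp
  inv_mem' := by
    intro g hg
    have hg' : (mat K m n g).toBlocks₁₂ = 0 := hg
    have hg2 : Matrix.fromBlocks (mat K m n g).toBlocks₁₁ 0
        (mat K m n g).toBlocks₂₁ (mat K m n g).toBlocks₂₂ = mat K m n g := by
      rw [← hg']; exact Matrix.fromBlocks_toBlocks _
    set A := (mat K m n g).toBlocks₁₁ with hA
    have hdet : IsUnit A.det := by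
      have h1 : (mat K m n g).det = 1 := g.prop
      rw [← hg2, Matrix.det_fromBlocks_zero₁₂] at h1
      exact isUnit_iff_exists_inv.mpr ⟨_, h1⟩
    have hmul : mat K m n g * mat K m n g⁻¹ = 1 := by
      have : mat K m n (g * g⁻¹) = mat K m n g * mat K m n g⁻¹ := rfl
      rw [← this, mul_inv_cancel]
      rfl
    have hBlock : A * (mat K m n g⁻¹).toBlocks₁₂ = 0 := by
      have h2 := congrArg Matrix.toBlocks₁₂ hmul
      rw [← hg2, ← Matrix.fromBlocks_toBlocks (mat K m n g⁻¹),
        Matrix.fromBlocks_multiply] at h2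
      rw [← Matrix.fromBlocks_one, Matrix.toBlocks_fromBlocks₁₂] at h2
      have h1' : (1 : Matrix (Fin m ⊕ Fin n) (Fin m ⊕ Fin n) (KS K)).toBlocks₁₂ = 0 := by
        first
          | (rw [← Matrix.fromBlocks_one, Matrix.toBlocks_fromBlocks₁₂])
          | (ext i j; simp [Matrix.toBlocks₁₂, Matrix.one_apply])
      simpa [h1'] using h2
    show (mat K m n g⁻¹).toBlocks₁₂ = 0
    calc (mat K m n g⁻¹).toBlocks₁₂
        = A⁻¹ * (A * (mat K m n g⁻¹).toBlocks₁₂) := by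
          rw [Matrix.nonsing_inv_mul_cancel_left _ _ hdet]
      _ = 0 := by rw [hBlock, Matrix.mul_zero]


section VolAux

open scoped Real

variable {K : Type} [Field K] [NumberField K]

lemma placeAbs_nonneg' (z : KS K) (w : InfinitePlace K) : 0 ≤ placeAbs K z w := by
  unfold placeAbs; split
  · exact abs_nonneg _
  · exact norm_nonneg _

lemma placeAbs_isReal (z : KS K) (w : {w : InfinitePlace K // w.IsReal}) :
    placeAbs K z w.1 = |z.1 w| := by
  unfold placeAbs; rw [dif_pos w.2]

lemma placeAbs_isComplex (z : KS K) (w : {w : InfinitePlace K // w.IsComplex}) :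
    placeAbs K z w.1 = ‖z.2 w‖ := by
  unfold placeAbs
  rw [dif_neg ((NumberField.InfinitePlace.not_isReal_iff_isComplex (K := K)).mpr w.2)]

lemma measurable_placeAbs (w : InfinitePlace K) : Measurable (fun z : KS K => placeAbs K z w) := by
  by_cases h : w.IsReal
  · simp only [placeAbs, dif_pos h]
    exact (measurable_pi_apply _).comp measurable_fst |>.abs
  · simp only [placeAbs, dif_neg h]
    exact continuous_norm.measurable.comp
      ((measurable_pi_apply _).comp measurable_snd)

variable {m : ℕ}

lemma wnorm_eq_sup' (hm : 0 < m) (a : Fin m → InfinitePlace K → ℝ) (x : Fin m → KS K) :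
    wnorm a x = Finset.univ.sup'
      (Finset.univ_nonempty_iff.mpr ⟨⟨0, hm⟩⟩) (fun i =>
        Finset.univ.sup' Finset.univ_nonempty (fun w : InfinitePlace K =>
          placeAbs K (x i) w ^ (1 / a i w))) := by
  haveI : Nonempty (Fin m) := ⟨⟨0, hm⟩⟩
  unfold wnorm
  rw [← Finset.sup'_univ_eq_ciSup]
  exact Finset.sup'_congr _ rfl (fun i _ => (Finset.sup'_univ_eq_ciSup _).symm)

lemma wnorm_lt_iff (hm : 0 < m) (a : Fin m → InfinitePlace K → ℝ) (x : Fin m → KS K) {R : ℝ} :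
    wnorm a x < R ↔ ∀ i w, placeAbs K (x i) w ^ (1 / a i w) < R := by
  rw [wnorm_eq_sup' hm, Finset.sup'_lt_iff]
  simp [Finset.sup'_lt_iff]

lemma wnorm_nonneg' (hm : 0 < m) (a : Fin m → InfinitePlace K → ℝ) (x : Fin m → KS K) :
    0 ≤ wnorm a x := by
  haveI : Nonempty (Fin m) := ⟨⟨0, hm⟩⟩
  obtain ⟨w⟩ := (inferInstance : Nonempty (InfinitePlace K))
  obtain ⟨i⟩ := (inferInstance : Nonempty (Fin m))
  rw [wnorm_eq_sup' hm]
  refine le_trans (Real.rpow_nonneg (placeAbs_nonneg' (x i) w) (1 / a i w))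
    (le_trans (Finset.le_sup' (fun w => placeAbs K (x i) w ^ (1 / a i w)) (Finset.mem_univ w))
      (Finset.le_sup' (fun i => Finset.univ.sup' Finset.univ_nonempty
        (fun w : InfinitePlace K => placeAbs K (x i) w ^ (1 / a i w))) (Finset.mem_univ i)))

lemma measurable_wnorm (hm : 0 < m) (a : Fin m → InfinitePlace K → ℝ) (ha : ∀ i w, 0 < a i w) :
    Measurable (wnorm (K := K) a) := by
  haveI : Nonempty (Fin m) := ⟨⟨0, hm⟩⟩
  have : wnorm (K := K) a = Finset.univ.sup' Finset.univ_nonempty (fun i =>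
      Finset.univ.sup' Finset.univ_nonempty (fun (w : InfinitePlace K) (x : Fin m → KS K) =>
        placeAbs K (x i) w ^ (1 / a i w))) := by
    funext x
    rw [wnorm_eq_sup' hm]
    rw [Finset.sup'_apply]
    refine Finset.sup'_congr _ rfl (fun i _ => ?_)
    rw [Finset.sup'_apply]
  rw [this]
  refine Finset.measurable_sup' _ (fun i _ => ?_)
  refine Finset.measurable_sup' _ (fun w _ => ?_)
  exact (Real.continuous_rpow_const (le_of_lt (by have := ha i w; positivity))).measurable.comp
    ((measurable_placeAbs w).comp (measurable_pi_apply i))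

end VolAux

section VolAux2

open scoped Real

variable {K : Type} [Field K] [NumberField K] {m : ℕ}

lemma ennreal_pi_ball (r : ℝ) (hr : 0 ≤ r) :
    (ENNReal.ofReal r) ^ 2 * (NNReal.pi : ℝ≥0∞) = ENNReal.ofReal (π * r ^ 2) := by
  rw [ENNReal.ofReal_mul Real.pi_pos.le, ← ENNReal.ofReal_pow hr, mul_comm]
  congr 1
  simp [ENNReal.ofReal, Real.toNNReal, NNReal.pi, Real.pi_pos.le, max_eq_left]
  rfl

lemma volume_wnorm_lt (hm : 0 < m) {a : Fin m → InfinitePlace K → ℝ} (ha : IsWeight a)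
    {R : ℝ} (hR : 0 < R) :
    volume {x : Fin m → KS K | wnorm a x < R} =
      ENNReal.ofReal (((2:ℝ) ^ (Fintype.card {w : InfinitePlace K // w.IsReal}) *
        π ^ (Fintype.card {w : InfinitePlace K // w.IsComplex})) ^ m * R) := by
  obtain ⟨hapos, hsum⟩ := ha
  have hset : {x : Fin m → KS K | wnorm a x < R} =
      Set.pi Set.univ (fun i : Fin m =>
        (Set.pi Set.univ (fun w : {w : InfinitePlace K // w.IsReal} =>
            Set.Ioo (-(R ^ a i w.1)) (R ^ a i w.1))) ×ˢ
        (Set.pi Set.univ (fun w : {w : InfinitePlace K // w.IsComplex} =>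
            Metric.ball (0:ℂ) (R ^ a i w.1)))) := by
    ext x
    simp only [mem_setOf_eq, wnorm_lt_iff hm, Set.mem_pi, Set.mem_univ, forall_true_left,
      Set.mem_prod, Set.mem_Ioo, mem_ball_zero_iff]
    constructor
    · intro h i
      refine ⟨fun w => ?_, fun w => ?_⟩
      · have := h i w.1
        rw [placeAbs_isReal, one_div,
          Real.rpow_inv_lt_iff_of_pos (abs_nonneg _) hR.le (hapos i w.1)] at this
        exact abs_lt.mp this
      · have := h i w.1
        rw [placeAbs_isComplex, one_div,
          Real.rpow_inv_lt_iff_of_pos (norm_nonneg _) hR.le (hapos i w.1)] at this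
        exact this
    · intro h i w
      rcases w.isReal_or_isComplex with hw | hw
      · have := (h i).1 ⟨w, hw⟩
        rw [placeAbs_isReal (x i) ⟨w, hw⟩, one_div,
          Real.rpow_inv_lt_iff_of_pos (abs_nonneg _) hR.le (hapos i w)]
        exact abs_lt.mpr this
      · have := (h i).2 ⟨w, hw⟩
        rw [placeAbs_isComplex (x i) ⟨w, hw⟩, one_div,
          Real.rpow_inv_lt_iff_of_pos (norm_nonneg _) hR.le (hapos i w)]
        exact this
  rw [hset, volume_pi, Measure.pi_pi]
  have hfac : ∀ i : Fin m,
      (volume : Measure (KS K)) ((Set.pi Set.univ fun w : {w : InfinitePlace K // w.IsReal} =>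
        Set.Ioo (-(R ^ a i w.1)) (R ^ a i w.1)) ×ˢ (Set.pi Set.univ
        fun w : {w : InfinitePlace K // w.IsComplex} => Metric.ball (0:ℂ) (R ^ a i w.1))) =
      ENNReal.ofReal ((∏ w : {w : InfinitePlace K // w.IsReal}, 2 * R ^ a i w.1) *
        ∏ w : {w : InfinitePlace K // w.IsComplex}, π * (R ^ a i w.1) ^ 2) := by
    intro i
    have hpos : ∀ w : InfinitePlace K, (0:ℝ) < R ^ a i w := fun w => Real.rpow_pos_of_pos hR _
    rw [Measure.volume_eq_prod, Measure.prod_prod, volume_pi, volume_pi, Measure.pi_pi,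
      Measure.pi_pi]
    simp only [Real.volume_Ioo, Complex.volume_ball]
    rw [ENNReal.ofReal_mul (Finset.prod_nonneg fun w _ => by have := hpos w.1; positivity),
      ENNReal.ofReal_prod_of_nonneg (fun w _ => by have := hpos w.1; positivity),
      ENNReal.ofReal_prod_of_nonneg (fun w _ => by have := hpos w.1; positivity)]
    congr 1
    · exact Finset.prod_congr rfl fun w _ => by rw [sub_neg_eq_add, two_mul]
    · exact Finset.prod_congr rfl fun w _ => (ennreal_pi_ball _ (hpos w.1).le).symm ▸ rfl
  simp only [hfac]
  rw [← ENNReal.ofReal_prod_of_nonneg (fun i _ => by positivity)]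
  congr 1
  -- real algebra
  set r₁ := Fintype.card {w : InfinitePlace K // w.IsReal}
  set r₂ := Fintype.card {w : InfinitePlace K // w.IsComplex}
  set L := Real.log R with hL
  have hrpow : ∀ y : ℝ, R ^ y = Real.exp (L * y) := fun y => Real.rpow_def_of_pos hR y
  have h2 : ∀ i : Fin m, (∏ w : {w : InfinitePlace K // w.IsReal}, 2 * R ^ a i w.1) =
      2 ^ r₁ * Real.exp (L * ∑ w : {w : InfinitePlace K // w.IsReal}, a i w.1) := by
    intro i
    rw [Finset.prod_mul_distrib, Finset.prod_const, Finset.card_univ, Finset.mul_sum,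
      Real.exp_sum]
    exact congrArg _ (Finset.prod_congr rfl fun w _ => hrpow _)
  have h3 : ∀ i : Fin m, (∏ w : {w : InfinitePlace K // w.IsComplex}, π * (R ^ a i w.1) ^ 2) =
      π ^ r₂ * Real.exp (L * (2 * ∑ w : {w : InfinitePlace K // w.IsComplex}, a i w.1)) := by
    intro i
    rw [Finset.prod_mul_distrib, Finset.prod_const, Finset.card_univ]
    congr 1
    have : ∀ w : {w : InfinitePlace K // w.IsComplex}, (R ^ a i w.1) ^ 2 =
        Real.exp (L * (a i w.1 * 2)) := by
      intro w
      rw [← Real.rpow_natCast (R ^ a i w.1) 2, ← Real.rpow_mul hR.le, hrpow]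
      norm_num
    rw [Finset.prod_congr rfl fun w _ => this w, ← Real.exp_sum]
    congr 1
    rw [← Finset.mul_sum, ← Finset.sum_mul]
    ring
  calc ∏ i : Fin m, ((∏ w : {w : InfinitePlace K // w.IsReal}, 2 * R ^ a i w.1) *
        ∏ w : {w : InfinitePlace K // w.IsComplex}, π * (R ^ a i w.1) ^ 2)
      = ∏ i : Fin m, ((2:ℝ) ^ r₁ * π ^ r₂ *
          Real.exp (L * ((∑ w : {w : InfinitePlace K // w.IsReal}, a i w.1) +
            2 * ∑ w : {w : InfinitePlace K // w.IsComplex}, a i w.1))) := by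
        refine Finset.prod_congr rfl fun i _ => ?_
        rw [h2 i, h3 i, mul_mul_mul_comm, ← Real.exp_add]
        congr 1
        ring
    _ = ((2:ℝ) ^ r₁ * π ^ r₂) ^ m * Real.exp (L * ∑ i : Fin m,
          ((∑ w : {w : InfinitePlace K // w.IsReal}, a i w.1) +
            2 * ∑ w : {w : InfinitePlace K // w.IsComplex}, a i w.1)) := by
        rw [Finset.prod_mul_distrib, Finset.prod_const, Finset.card_univ, Fintype.card_fin,
          Finset.mul_sum, Real.exp_sum]
    _ = ((2:ℝ) ^ r₁ * π ^ r₂) ^ m * R := by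
        congr 1
        have hone : (∑ i : Fin m, ((∑ w : {w : InfinitePlace K // w.IsReal}, a i w.1) +
            2 * ∑ w : {w : InfinitePlace K // w.IsComplex}, a i w.1)) = 1 := by
          have hswap1 : ∑ i : Fin m, ∑ w : {w : InfinitePlace K // w.IsReal}, a i w.1
              = ∑ w : {w : InfinitePlace K // w.IsReal}, ∑ i : Fin m, a i w.1 :=
            Finset.sum_comm
          have hswap2 : ∑ i : Fin m, ∑ w : {w : InfinitePlace K // w.IsComplex}, a i w.1
              = ∑ w : {w : InfinitePlace K // w.IsComplex}, ∑ i : Fin m, a i w.1 :=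
            Finset.sum_comm
          rw [Finset.sum_add_distrib, hswap1, ← Finset.mul_sum, hswap2]
          exact hsum
        rw [hone, mul_one, hL, Real.exp_log hR]

end VolAux2

section VolAux3

open scoped Real

variable {K : Type} [Field K] [NumberField K] {n : ℕ}

lemma map_wnorm (hn : 0 < n) {b : Fin n → InfinitePlace K → ℝ} (hb : IsWeight b) :
    Measure.map (wnorm b) (volume : Measure (Fin n → KS K)) =
      ENNReal.ofReal (((2:ℝ) ^ (Fintype.card {w : InfinitePlace K // w.IsReal}) *
        π ^ (Fintype.card {w : InfinitePlace K // w.IsComplex})) ^ n) •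
        (volume : Measure ℝ).restrict (Set.Ioi 0) := by
  set D := (((2:ℝ) ^ (Fintype.card {w : InfinitePlace K // w.IsReal}) *
        π ^ (Fintype.card {w : InfinitePlace K // w.IsComplex})) ^ n : ℝ) with hD
  have hD0 : (0:ℝ) ≤ D := by rw [hD]; positivity
  have hmeas := measurable_wnorm hn b hb.1
  have hIio : ∀ s : ℝ, Measure.map (wnorm b) volume (Set.Iio s) = ENNReal.ofReal (D * s) := by
    intro s
    rw [Measure.map_apply hmeas measurableSet_Iio]
    rcases le_or_gt s 0 with hs | hs
    · have hem : wnorm b ⁻¹' (Set.Iio s) = (∅ : Set (Fin n → KS K)) := by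
        ext y
        simp only [Set.mem_preimage, Set.mem_Iio, Set.mem_empty_iff_false, iff_false, not_lt]
        exact le_trans hs (wnorm_nonneg' hn b y)
      rw [hem, measure_empty]
      symm
      rw [ENNReal.ofReal_eq_zero]
      exact mul_nonpos_of_nonneg_of_nonpos hD0 hs
    · exact volume_wnorm_lt hn hb hs
  haveI hlf : IsLocallyFiniteMeasure (Measure.map (wnorm b) volume) := by
    refine ⟨fun x => ⟨Set.Iio (x+1), Iio_mem_nhds (lt_add_one x), ?_⟩⟩
    rw [hIio]; exact ENNReal.ofReal_lt_top
  have hIic : ∀ q : ℝ, Measure.map (wnorm b) volume (Set.Iic q) = ENNReal.ofReal (D * q) := by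
    intro q
    refine le_antisymm ?_ ?_
    · have h1 : Filter.Tendsto (fun k : ℕ => q + 1/((k:ℝ)+1)) Filter.atTop (nhds q) := by
        have h0 := tendsto_one_div_add_atTop_nhds_zero_nat (𝕜 := ℝ)
        simpa using tendsto_const_nhds.add h0
      have h2 : Filter.Tendsto (fun k : ℕ => D * (q + 1/((k:ℝ)+1))) Filter.atTop
          (nhds (D * q)) := h1.const_mul D
      have hseq : Filter.Tendsto (fun k : ℕ => ENNReal.ofReal (D * (q + 1/((k:ℝ)+1))))
          Filter.atTop (nhds (ENNReal.ofReal (D * q))) :=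
        (ENNReal.continuous_ofReal.tendsto _).comp h2
      refine ge_of_tendsto hseq (Filter.Eventually.of_forall fun k => ?_)
      calc Measure.map (wnorm b) volume (Set.Iic q)
          ≤ Measure.map (wnorm b) volume (Set.Iio (q + 1/((k:ℝ)+1))) :=
            measure_mono (Set.Iic_subset_Iio.mpr (lt_add_of_pos_right q (by positivity)))
        _ = ENNReal.ofReal (D * (q + 1/((k:ℝ)+1))) := hIio _
    · rw [← hIio q]
      exact measure_mono Set.Iio_subset_Iic_self
  refine Real.measure_ext_Ioo_rat (fun p q => ?_)
  rcases le_or_gt (q:ℝ) (p:ℝ) with hpq | hpq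
  · rw [Set.Ioo_eq_empty (by exact_mod_cast not_lt.mpr hpq)]
    simp
  · have hsub : Set.Iic (p:ℝ) ⊆ Set.Iio (q:ℝ) := Set.Iic_subset_Iio.mpr hpq
    have hL : Measure.map (wnorm b) volume (Set.Ioo (p:ℝ) q) =
        ENNReal.ofReal (D * q) - ENNReal.ofReal (D * p) := by
      rw [(by ext x; simp [and_comm] : Set.Ioo (p:ℝ) q = Set.Iio (q:ℝ) \ Set.Iic (p:ℝ)),
        measure_diff hsub measurableSet_Iic.nullMeasurableSet
          (by rw [hIic]; exact ENNReal.ofReal_ne_top),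
        hIio, hIic]
    rw [hL, Measure.smul_apply, Measure.restrict_apply measurableSet_Ioo, Set.Ioo_inter_Ioi,
      Real.volume_Ioo, smul_eq_mul]
    rcases le_or_gt 0 (p:ℝ) with hp | hp
    · rw [max_eq_left hp, ← ENNReal.ofReal_sub _ (mul_nonneg hD0 hp), ← ENNReal.ofReal_mul hD0]
      congr 1
      ring
    · rw [max_eq_right hp.le]
      have : ENNReal.ofReal (D * p) = 0 := by
        rw [ENNReal.ofReal_eq_zero]
        exact mul_nonpos_of_nonneg_of_nonpos hD0 hp.le
      rw [this, tsub_zero, ← ENNReal.ofReal_mul hD0, sub_zero]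

end VolAux3

section VolAux4

open scoped Real

variable {K : Type} [Field K] [NumberField K] {m n : ℕ}

lemma volume_Eset (hm : 0 < m) (hn : 0 < n) {a : Fin m → InfinitePlace K → ℝ}
    {b : Fin n → InfinitePlace K → ℝ} (ha : IsWeight a) (hb : IsWeight b)
    {c T : ℝ} (hc : 0 < c) (hT : 0 < T) :
    volume (Eset a b c T) =
      ENNReal.ofReal (((2:ℝ) ^ (Fintype.card {w : InfinitePlace K // w.IsReal}) *
        π ^ (Fintype.card {w : InfinitePlace K // w.IsComplex})) ^ (m + n) * (c * T)) := by
  haveI hsf : SigmaFinite (volume : Measure (KS K)) := inferInstance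
  set D := ((2:ℝ) ^ (Fintype.card {w : InfinitePlace K // w.IsReal}) *
        π ^ (Fintype.card {w : InfinitePlace K // w.IsComplex}) : ℝ) with hDdef
  have hD0 : (0:ℝ) < D := by rw [hDdef]; positivity
  have hNa := measurable_wnorm hm a ha.1
  have hNb := measurable_wnorm hn b hb.1
  set E := Real.exp T with hE
  have hE1 : (1:ℝ) < E := by
    rw [hE]
    simpa using Real.exp_lt_exp.mpr hT
  set S : Set ((Fin m → KS K) × (Fin n → KS K)) :=
    {p | wnorm a p.1 * wnorm b p.2 < c ∧ 1 ≤ wnorm b p.2 ∧ wnorm b p.2 < E} with hSdef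
  have h1m : Measurable fun p : (Fin m → KS K) × (Fin n → KS K) =>
      wnorm a p.1 * wnorm b p.2 := (hNa.comp measurable_fst).mul (hNb.comp measurable_snd)
  have h2m : Measurable fun p : (Fin m → KS K) × (Fin n → KS K) => wnorm b p.2 :=
    hNb.comp measurable_snd
  have hSmeas : MeasurableSet S :=
    (measurableSet_lt h1m measurable_const).inter
      ((measurableSet_le measurable_const h2m).inter (measurableSet_lt h2m measurable_const))
  have hmp := volume_measurePreserving_sumPiEquivProdPi (fun _ : Fin m ⊕ Fin n => KS K)
  have hpre : Eset a b c T =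
      (MeasurableEquiv.sumPiEquivProdPi (fun _ : Fin m ⊕ Fin n => KS K)) ⁻¹' S := rfl
  rw [hpre, hmp.measure_preimage hSmeas.nullMeasurableSet]
  rw [Measure.volume_eq_prod, Measure.prod_apply_symm hSmeas]
  set Y : Set (Fin n → KS K) := wnorm b ⁻¹' (Set.Ico 1 E) with hY
  have hslice : ∀ y : Fin n → KS K, volume ((fun x => (x, y)) ⁻¹' S) =
      Y.indicator (fun y => ENNReal.ofReal (D ^ m * (c / wnorm b y))) y := by
    intro y
    by_cases hy : y ∈ Y
    · rw [Set.indicator_of_mem hy]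
      obtain ⟨hy1, hy2⟩ := hy
      have h0 : (0:ℝ) < wnorm b y := lt_of_lt_of_le one_pos hy1
      have hxeq : (fun x => (x, y)) ⁻¹' S = {x : Fin m → KS K | wnorm a x < c / wnorm b y} := by
        ext x
        simp only [hSdef, Set.mem_preimage, Set.mem_setOf_eq, hy1, hy2, and_true, true_and]
        exact (lt_div_iff₀ h0).symm
      rw [hxeq, volume_wnorm_lt hm ha (div_pos hc h0)]
    · rw [Set.indicator_of_notMem hy]
      have hxeq : (fun x => (x, y)) ⁻¹' S = (∅ : Set (Fin m → KS K)) := by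
        ext x
        simp only [hSdef, Set.mem_preimage, Set.mem_setOf_eq, Set.mem_empty_iff_false, iff_false,
          not_and]
        intro _ h1 h2
        exact hy ⟨h1, h2⟩
      rw [hxeq, measure_empty]
  simp_rw [hslice]
  rw [lintegral_indicator (hNb measurableSet_Ico)]
  have hg : Measurable fun s : ℝ => ENNReal.ofReal (D ^ m * (c / s)) :=
    ENNReal.measurable_ofReal.comp (measurable_const.mul (measurable_const.div measurable_id))
  rw [← setLIntegral_map measurableSet_Ico hg hNb]
  rw [map_wnorm hn hb, Measure.restrict_smul, lintegral_smul_measure,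
    Measure.restrict_restrict measurableSet_Ico]
  have hsub2 : Set.Ico (1:ℝ) E ∩ Set.Ioi 0 = Set.Ico 1 E :=
    Set.inter_eq_self_of_subset_left fun s hs => lt_of_lt_of_le one_pos hs.1
  rw [hsub2]
  have hInt : MeasureTheory.IntegrableOn (fun s : ℝ => D ^ m * (c / s)) (Set.Ico 1 E) volume := by
    have hcont : ContinuousOn (fun s : ℝ => D ^ m * (c / s)) (Set.Icc 1 E) :=
      continuousOn_const.mul (continuousOn_const.div continuousOn_id
        (fun s hs => ne_of_gt (lt_of_lt_of_le one_pos hs.1)))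
    exact hcont.integrableOn_Icc.mono_set Set.Ico_subset_Icc_self
  have hnn : 0 ≤ᵐ[volume.restrict (Set.Ico 1 E)] fun s : ℝ => D ^ m * (c / s) := by
    refine (MeasureTheory.ae_restrict_iff' measurableSet_Ico).mpr
      (Filter.Eventually.of_forall fun s hs => ?_)
    have hs0 : (0:ℝ) < s := lt_of_lt_of_le one_pos hs.1
    positivity
  rw [← MeasureTheory.ofReal_integral_eq_lintegral_ofReal hInt hnn]
  have hint : (∫ s in Set.Ico (1:ℝ) E, D ^ m * (c / s)) = D ^ m * c * T := by
    rw [MeasureTheory.integral_Ico_eq_integral_Ioo, ← MeasureTheory.integral_Ioc_eq_integral_Ioo,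
      ← intervalIntegral.integral_of_le hE1.le]
    have hre : ∀ s : ℝ, D ^ m * (c / s) = (D ^ m * c) * (1 / s) := fun s => by ring
    simp_rw [hre]
    rw [intervalIntegral.integral_const_mul, integral_one_div_of_pos one_pos (lt_trans one_pos hE1)]
    rw [div_one, hE, Real.log_exp]
  rw [hint, smul_eq_mul, ← ENNReal.ofReal_mul (by positivity)]
  congr 1
  rw [pow_add]
  ring

end VolAux4


/-- **The volume of `E_{T,c}`**: `|E_{T,c}| = (2^{#S_ℝ} π^{#S_ℂ} ϖ^k)^d · c · T`;
in particular `r·|E_{T,c}| = T·|E_{r,c}|`. -/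
theorem Eset_volume (K : Type) [Field K] [NumberField K] (m n : ℕ) (hm : 0 < m) (hn : 0 < n)
    (a : Fin m → InfinitePlace K → ℝ) (b : Fin n → InfinitePlace K → ℝ)
    (ha : IsWeight a) (hb : IsWeight b)
    (ϖ : ℝ) (hϖ : 0 < ϖ) (hcov : covolOne K ϖ)
    (c T : ℝ) (hc : 0 < c) (hT : 0 < T) :
    lamd K (Fin m ⊕ Fin n) ϖ (Eset a b c T) =
        ENNReal.ofReal
          (((2 : ℝ) ^ (Fintype.card {w : InfinitePlace K // w.IsReal}) *
              Real.pi ^ (Fintype.card {w : InfinitePlace K // w.IsComplex}) *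
              ϖ ^ (Module.finrank ℚ K)) ^ (m + n) * (c * T)) ∧
      ∀ r : ℝ, 0 < r →
        ENNReal.ofReal r * lamd K (Fin m ⊕ Fin n) ϖ (Eset a b c T) =
          ENNReal.ofReal T * lamd K (Fin m ⊕ Fin n) ϖ (Eset a b c r) := by
  haveI hsf : SigmaFinite (volume : Measure (KS K)) := inferInstance
  have key : ∀ t : ℝ, 0 < t → lamd K (Fin m ⊕ Fin n) ϖ (Eset a b c t) =
      ENNReal.ofReal
        (((2 : ℝ) ^ (Fintype.card {w : InfinitePlace K // w.IsReal}) *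
            Real.pi ^ (Fintype.card {w : InfinitePlace K // w.IsComplex}) *
            ϖ ^ (Module.finrank ℚ K)) ^ (m + n) * (c * t)) := by
    intro t ht
    rw [lamd, Measure.smul_apply, volume_Eset hm hn ha hb hc ht, smul_eq_mul,
      ← ENNReal.ofReal_pow hϖ.le, ← ENNReal.ofReal_mul (by positivity)]
    congr 1
    rw [Fintype.card_sum, Fintype.card_fin, Fintype.card_fin, pow_mul]
    ring
  refine ⟨key T hT, fun r hr => ?_⟩
  rw [key T hT, key r hr, ← ENNReal.ofReal_mul hr.le, ← ENNReal.ofReal_mul hT.le]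
  congr 1
  ring

end Paper
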